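/- Let A be a Hermitian matrix with E < min spec(A), and B ≥ 0 positive semidefinite. For x ≥ 0, the smallest eigenvalue of A − xB is a nonincreasing function of x, and the number of eigenvalues of A − B below E (with multiplicity) equals the number of x ∈ (0,1) (with multiplicity) for which E is an eigenvalue of A − xB, where multiplicity at x means dim ker(A − xB − E). -/

import Mathlib

open scoped Classical ComplexOrder ENNReal

noncomputable section CrossAuxSec

namespace CrossAux

open Matrix Module Finset LinearMap

variable {n : Type*} [Fintype n] [DecidableEq n]

/-- The (real part of the) quadratic form of a matrix. -/
def qf (M : Matrix n n ℂ) (v : n → ℂ) : ℝ := (star v ⬝ᵥ M *ᵥ v).re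

/-- The squared norm of a vector. -/
def nsq (v : n → ℂ) : ℝ := (star v ⬝ᵥ v).re

lemma nsq_eq (v : n → ℂ) : nsq v = ∑ i, Complex.normSq (v i) := by
  simp only [nsq, dotProduct, Pi.star_apply, Complex.re_sum]
  congr 1; funext i
  rw [Complex.star_def, ← Complex.normSq_eq_conj_mul_self, Complex.ofReal_re]

lemma nsq_nonneg (v : n → ℂ) : 0 ≤ nsq v := by
  rw [nsq_eq]; exact Finset.sum_nonneg fun i _ => Complex.normSq_nonneg _

lemma nsq_pos {v : n → ℂ} (hv : v ≠ 0) : 0 < nsq v := by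
  obtain ⟨i, hi⟩ := Function.ne_iff.mp hv
  rw [nsq_eq]
  exact Finset.sum_pos' (fun i _ => Complex.normSq_nonneg _)
    ⟨i, Finset.mem_univ i, Complex.normSq_pos.mpr hi⟩

lemma qf_sub (M N : Matrix n n ℂ) (v : n → ℂ) : qf (M - N) v = qf M v - qf N v := by
  simp [qf, Matrix.sub_mulVec, dotProduct_sub, Complex.sub_re]

lemma qf_one (v : n → ℂ) : qf 1 v = nsq v := by
  simp [qf, nsq, Matrix.one_mulVec]

lemma real_smul_matrix (x : ℝ) (M : Matrix n n ℂ) : x • M = (x : ℂ) • M := by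
  ext i j; simp [Complex.real_smul]

lemma qf_smul (x : ℝ) (M : Matrix n n ℂ) (v : n → ℂ) : qf (x • M) v = x * qf M v := by
  rw [real_smul_matrix, qf, Matrix.smul_mulVec, dotProduct_smul]
  simp [qf, smul_eq_mul]

lemma qf_smul_one (x : ℝ) (v : n → ℂ) : qf (x • (1 : Matrix n n ℂ)) v = x * nsq v := by
  rw [qf_smul, qf_one]

lemma qf_conj (C M : Matrix n n ℂ) (v : n → ℂ) : qf (Cᴴ * M * C) v = qf M (C *ᵥ v) := by
  unfold qf
  rw [Matrix.star_mulVec, Matrix.mulVec_mulVec, Matrix.dotProduct_mulVec,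
    Matrix.dotProduct_mulVec, Matrix.vecMul_vecMul, mul_assoc]

lemma herm_dot_im {M : Matrix n n ℂ} (hM : M.IsHermitian) (v : n → ℂ) :
    (star v ⬝ᵥ M *ᵥ v).im = 0 := by
  rw [← Complex.conj_eq_iff_im]
  have h1 : star (star v ⬝ᵥ M *ᵥ v) = star (M *ᵥ v) ⬝ᵥ v := by
    rw [Matrix.star_dotProduct v (M *ᵥ v), star_star]
  calc (starRingEnd ℂ) (star v ⬝ᵥ M *ᵥ v) = star (M *ᵥ v) ⬝ᵥ v := h1
    _ = (star v ᵥ* Mᴴ) ⬝ᵥ v := by rw [Matrix.star_mulVec]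
    _ = star v ⬝ᵥ M *ᵥ v := by rw [hM.eq, ← Matrix.dotProduct_mulVec]

/-- The subspace of vectors supported on a finset of coordinates. -/
def coordSub (s : Finset n) : Submodule ℂ (n → ℂ) :=
  LinearMap.ker (LinearMap.funLeft ℂ ℂ (fun i : {i : n // i ∉ s} => (i : n)))

lemma mem_coordSub {s : Finset n} {v : n → ℂ} :
    v ∈ coordSub s ↔ ∀ i ∉ s, v i = 0 := by
  simp only [coordSub, LinearMap.mem_ker, LinearMap.funLeft_apply]
  constructor
  · intro h i hi
    exact congrFun h ⟨i, hi⟩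
  · intro h
    funext i
    exact h i.1 i.2

lemma finrank_coordSub (s : Finset n) : finrank ℂ (coordSub s) = s.card := by
  have hsurj : Function.Surjective (LinearMap.funLeft ℂ ℂ (fun i : {i : n // i ∉ s} => (i : n))) :=
    LinearMap.funLeft_surjective_of_injective ℂ ℂ _ Subtype.val_injective
  have h := LinearMap.finrank_range_add_finrank_ker
    (LinearMap.funLeft ℂ ℂ (fun i : {i : n // i ∉ s} => (i : n)))
  rw [LinearMap.range_eq_top.mpr hsurj, finrank_top] at h
  rw [Module.finrank_fintype_fun_eq_card, Module.finrank_fintype_fun_eq_card] at h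
  have hcard : Fintype.card {i : n // i ∉ s} = Fintype.card n - s.card := by
    rw [Fintype.card_subtype_compl]
    congr 1
    exact Fintype.card_coe s
  have hle : s.card ≤ Fintype.card n := by
    simpa using Finset.card_le_card (Finset.subset_univ s)
  unfold coordSub
  omega

/-- Linear equivalence given by multiplication by an invertible matrix. -/
def mulVecEquiv (U V : Matrix n n ℂ) (hUV : U * V = 1) (hVU : V * U = 1) :
    (n → ℂ) ≃ₗ[ℂ] (n → ℂ) :=
  LinearEquiv.ofLinear (Matrix.toLin' U) (Matrix.toLin' V)
    (by rw [← Matrix.toLin'_mul, hUV, Matrix.toLin'_one])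
    (by rw [← Matrix.toLin'_mul, hVU, Matrix.toLin'_one])

@[simp] lemma mulVecEquiv_apply (U V : Matrix n n ℂ) (hUV) (hVU) (v : n → ℂ) :
    mulVecEquiv U V hUV hVU v = U *ᵥ v := Matrix.toLin'_apply U v

@[simp] lemma mulVecEquiv_symm_apply (U V : Matrix n n ℂ) (hUV) (hVU) (v : n → ℂ) :
    (mulVecEquiv U V hUV hVU).symm v = V *ᵥ v := Matrix.toLin'_apply V v

section counting

variable {M : Matrix n n ℂ} (hM : M.IsHermitian) (E : ℝ)

lemma qf_diag (μ : n → ℝ) (w : n → ℂ) :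
    qf (Matrix.diagonal (fun i => (μ i : ℂ))) w = ∑ i, μ i * Complex.normSq (w i) := by
  simp only [qf, dotProduct, Matrix.mulVec_diagonal, Pi.star_apply, Complex.re_sum]
  congr 1; funext i
  rw [Complex.star_def, mul_left_comm, ← Complex.normSq_eq_conj_mul_self,
    ← Complex.ofReal_mul, Complex.ofReal_re]

lemma qf_spectral (w : n → ℂ) :
    qf M ((hM.eigenvectorUnitary : Matrix n n ℂ) *ᵥ w)
      = ∑ i, hM.eigenvalues i * Complex.normSq (w i) := by
  have h := hM.conjStarAlgAut_star_eigenvectorUnitary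
  rw [Unitary.conjStarAlgAut_star_apply] at h
  rw [Matrix.star_eq_conjTranspose] at h
  rw [← qf_conj, h]
  exact qf_diag hM.eigenvalues w

lemma nsq_unitary (w : n → ℂ) :
    nsq ((hM.eigenvectorUnitary : Matrix n n ℂ) *ᵥ w) = nsq w := by
  have h1 : ((hM.eigenvectorUnitary : Matrix n n ℂ))ᴴ * 1
      * (hM.eigenvectorUnitary : Matrix n n ℂ) = 1 := by
    rw [mul_one, ← Matrix.star_eq_conjTranspose,
      Unitary.star_mul_self_of_mem hM.eigenvectorUnitary.prop]
  have h2 : qf (((hM.eigenvectorUnitary : Matrix n n ℂ))ᴴ * 1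
      * (hM.eigenvectorUnitary : Matrix n n ℂ)) w
      = nsq ((hM.eigenvectorUnitary : Matrix n n ℂ) *ᵥ w) := by
    rw [qf_conj, qf_one]
  rw [← h2, h1, qf_one]

/-- The unitary change-of-basis equivalence for a Hermitian matrix. -/
def specEquiv : (n → ℂ) ≃ₗ[ℂ] (n → ℂ) :=
  mulVecEquiv (hM.eigenvectorUnitary : Matrix n n ℂ)
    (star (hM.eigenvectorUnitary : Matrix n n ℂ))
    (Unitary.mul_star_self_of_mem hM.eigenvectorUnitary.prop)
    (Unitary.star_mul_self_of_mem hM.eigenvectorUnitary.prop)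

lemma diag_sum_lt {μ : n → ℝ} {E : ℝ} {w : n → ℂ}
    (hw : ∀ i, ¬ μ i < E → w i = 0) (hw0 : w ≠ 0) :
    ∑ i, μ i * Complex.normSq (w i) < E * ∑ i, Complex.normSq (w i) := by
  rw [Finset.mul_sum]
  obtain ⟨i0, hi0⟩ := Function.ne_iff.mp hw0
  have hi0s : μ i0 < E := by
    by_contra hcon
    exact hi0 (hw i0 hcon)
  refine Finset.sum_lt_sum (fun i _ => ?_) ⟨i0, Finset.mem_univ i0, ?_⟩
  · by_cases hi : μ i < E
    · exact mul_le_mul_of_nonneg_right hi.le (Complex.normSq_nonneg _)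
    · rw [hw i hi]; simp
  · exact mul_lt_mul_of_pos_right hi0s (Complex.normSq_pos.mpr hi0)

lemma diag_sum_gt {μ : n → ℝ} {E : ℝ} {w : n → ℂ}
    (hw : ∀ i, ¬ E < μ i → w i = 0) (hw0 : w ≠ 0) :
    E * ∑ i, Complex.normSq (w i) < ∑ i, μ i * Complex.normSq (w i) := by
  rw [Finset.mul_sum]
  obtain ⟨i0, hi0⟩ := Function.ne_iff.mp hw0
  have hi0s : E < μ i0 := by
    by_contra hcon
    exact hi0 (hw i0 hcon)
  refine Finset.sum_lt_sum (fun i _ => ?_) ⟨i0, Finset.mem_univ i0, ?_⟩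
  · by_cases hi : E < μ i
    · exact mul_le_mul_of_nonneg_right hi.le (Complex.normSq_nonneg _)
    · rw [hw i hi]; simp
  · exact mul_lt_mul_of_pos_right hi0s (Complex.normSq_pos.mpr hi0)

lemma diag_sum_ge {μ : n → ℝ} {E : ℝ} {w : n → ℂ}
    (hw : ∀ i, μ i < E → w i = 0) :
    E * ∑ i, Complex.normSq (w i) ≤ ∑ i, μ i * Complex.normSq (w i) := by
  rw [Finset.mul_sum]
  refine Finset.sum_le_sum (fun i _ => ?_)
  by_cases hi : μ i < E
  · rw [hw i hi]; simp
  · exact mul_le_mul_of_nonneg_right (not_lt.mp hi) (Complex.normSq_nonneg _)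

lemma diag_sum_le {μ : n → ℝ} {E : ℝ} {w : n → ℂ}
    (hw : ∀ i, E < μ i → w i = 0) :
    ∑ i, μ i * Complex.normSq (w i) ≤ E * ∑ i, Complex.normSq (w i) := by
  rw [Finset.mul_sum]
  refine Finset.sum_le_sum (fun i _ => ?_)
  by_cases hi : E < μ i
  · rw [hw i hi]; simp
  · exact mul_le_mul_of_nonneg_right (not_lt.mp hi) (Complex.normSq_nonneg _)

lemma exists_subspace_lt :
    ∃ W : Submodule ℂ (n → ℂ),
      finrank ℂ W = (Finset.univ.filter fun i => hM.eigenvalues i < E).card ∧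
      ∀ v ∈ W, v ≠ 0 → qf M v < E * nsq v := by
  refine ⟨(coordSub (Finset.univ.filter fun i => hM.eigenvalues i < E)).map
    (specEquiv hM : (n → ℂ) →ₗ[ℂ] (n → ℂ)), ?_, ?_⟩
  · rw [LinearEquiv.finrank_map_eq, finrank_coordSub]
  · rintro v hv hv0
    obtain ⟨w, hw, rfl⟩ := Submodule.mem_map.mp hv
    have hw0 : w ≠ 0 := by
      rintro rfl; exact hv0 (map_zero _)
    have happ : (specEquiv hM : (n → ℂ) →ₗ[ℂ] (n → ℂ)) w
        = (hM.eigenvectorUnitary : Matrix n n ℂ) *ᵥ w := Matrix.toLin'_apply _ _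
    rw [happ, qf_spectral, nsq_unitary, nsq_eq]
    refine diag_sum_lt (fun i hi => ?_) hw0
    exact (mem_coordSub.mp hw) i (by simpa using hi)

lemma exists_subspace_gt :
    ∃ W : Submodule ℂ (n → ℂ),
      finrank ℂ W = (Finset.univ.filter fun i => E < hM.eigenvalues i).card ∧
      ∀ v ∈ W, v ≠ 0 → E * nsq v < qf M v := by
  refine ⟨(coordSub (Finset.univ.filter fun i => E < hM.eigenvalues i)).map
    (specEquiv hM : (n → ℂ) →ₗ[ℂ] (n → ℂ)), ?_, ?_⟩
  · rw [LinearEquiv.finrank_map_eq, finrank_coordSub]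
  · rintro v hv hv0
    obtain ⟨w, hw, rfl⟩ := Submodule.mem_map.mp hv
    have hw0 : w ≠ 0 := by
      rintro rfl; exact hv0 (map_zero _)
    have happ : (specEquiv hM : (n → ℂ) →ₗ[ℂ] (n → ℂ)) w
        = (hM.eigenvectorUnitary : Matrix n n ℂ) *ᵥ w := Matrix.toLin'_apply _ _
    rw [happ, qf_spectral, nsq_unitary, nsq_eq]
    refine diag_sum_gt (fun i hi => ?_) hw0
    exact (mem_coordSub.mp hw) i (by simpa using hi)

lemma finrank_le_of_lt (W : Submodule ℂ (n → ℂ))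
    (hW : ∀ v ∈ W, v ≠ 0 → qf M v < E * nsq v) :
    finrank ℂ W ≤ (Finset.univ.filter fun i => hM.eigenvalues i < E).card := by
  set W' := W.map ((specEquiv hM).symm : (n → ℂ) →ₗ[ℂ] (n → ℂ)) with hW'
  set P := coordSub (Finset.univ.filter fun i => ¬ hM.eigenvalues i < E) with hP
  have hbot : W' ⊓ P = ⊥ := by
    rw [Submodule.eq_bot_iff]
    intro w hw
    by_contra hw0
    obtain ⟨hwW', hwP⟩ := Submodule.mem_inf.mp hw
    obtain ⟨v, hv, hvw⟩ := Submodule.mem_map.mp hwW'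
    have hkey : qf M ((hM.eigenvectorUnitary : Matrix n n ℂ) *ᵥ w)
        < E * nsq ((hM.eigenvectorUnitary : Matrix n n ℂ) *ᵥ w) := by
      apply hW
      · have : (specEquiv hM) w = (hM.eigenvectorUnitary : Matrix n n ℂ) *ᵥ w :=
          Matrix.toLin'_apply _ _
        rw [← this, ← hvw]
        simpa using hv
      · intro hcon
        apply hw0
        have := congrArg (fun z => (star (hM.eigenvectorUnitary : Matrix n n ℂ)) *ᵥ z) hcon
        simpa [Matrix.mulVec_mulVec, Unitary.star_mul_self_of_mem
          hM.eigenvectorUnitary.prop, Matrix.one_mulVec, Matrix.mulVec_zero] using this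
    rw [qf_spectral, nsq_unitary, nsq_eq] at hkey
    have hge := diag_sum_ge (μ := hM.eigenvalues) (E := E) (w := w)
      (fun i hi => (mem_coordSub.mp hwP) i (by simpa using hi))
    linarith
  have hrk : finrank ℂ W = finrank ℂ W' := (LinearEquiv.finrank_map_eq _ _).symm
  have h1 : finrank ℂ W' + finrank ℂ P
      = finrank ℂ ↥(W' ⊔ P) := by
    have := Submodule.finrank_sup_add_finrank_inf_eq W' P
    rw [hbot, finrank_bot, add_zero] at this
    omega
  have h2 : finrank ℂ ↥(W' ⊔ P) ≤ Fintype.card n := by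
    simpa [Module.finrank_fintype_fun_eq_card] using Submodule.finrank_le (W' ⊔ P)
  have h3 : finrank ℂ P = (Finset.univ.filter fun i => ¬ hM.eigenvalues i < E).card :=
    finrank_coordSub _
  have h4 := Finset.card_filter_add_card_filter_not
    (s := (Finset.univ : Finset n)) (p := fun i => hM.eigenvalues i < E)
  rw [Finset.card_univ] at h4
  omega

lemma finrank_le_of_gt (W : Submodule ℂ (n → ℂ))
    (hW : ∀ v ∈ W, v ≠ 0 → E * nsq v < qf M v) :
    finrank ℂ W ≤ (Finset.univ.filter fun i => E < hM.eigenvalues i).card := by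
  set W' := W.map ((specEquiv hM).symm : (n → ℂ) →ₗ[ℂ] (n → ℂ)) with hW'
  set P := coordSub (Finset.univ.filter fun i => ¬ E < hM.eigenvalues i) with hP
  have hbot : W' ⊓ P = ⊥ := by
    rw [Submodule.eq_bot_iff]
    intro w hw
    by_contra hw0
    obtain ⟨hwW', hwP⟩ := Submodule.mem_inf.mp hw
    obtain ⟨v, hv, hvw⟩ := Submodule.mem_map.mp hwW'
    have hkey : E * nsq ((hM.eigenvectorUnitary : Matrix n n ℂ) *ᵥ w)
        < qf M ((hM.eigenvectorUnitary : Matrix n n ℂ) *ᵥ w) := by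
      apply hW
      · have : (specEquiv hM) w = (hM.eigenvectorUnitary : Matrix n n ℂ) *ᵥ w :=
          Matrix.toLin'_apply _ _
        rw [← this, ← hvw]
        simpa using hv
      · intro hcon
        apply hw0
        have := congrArg (fun z => (star (hM.eigenvectorUnitary : Matrix n n ℂ)) *ᵥ z) hcon
        simpa [Matrix.mulVec_mulVec, Unitary.star_mul_self_of_mem
          hM.eigenvectorUnitary.prop, Matrix.one_mulVec, Matrix.mulVec_zero] using this
    rw [qf_spectral, nsq_unitary, nsq_eq] at hkey
    have hle := diag_sum_le (μ := hM.eigenvalues) (E := E) (w := w)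
      (fun i hi => (mem_coordSub.mp hwP) i (by simpa using hi))
    linarith
  have hrk : finrank ℂ W = finrank ℂ W' := (LinearEquiv.finrank_map_eq _ _).symm
  have h1 : finrank ℂ W' + finrank ℂ P
      = finrank ℂ ↥(W' ⊔ P) := by
    have := Submodule.finrank_sup_add_finrank_inf_eq W' P
    rw [hbot, finrank_bot, add_zero] at this
    omega
  have h2 : finrank ℂ ↥(W' ⊔ P) ≤ Fintype.card n := by
    simpa [Module.finrank_fintype_fun_eq_card] using Submodule.finrank_le (W' ⊔ P)
  have h3 : finrank ℂ P = (Finset.univ.filter fun i => ¬ E < hM.eigenvalues i).card :=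
    finrank_coordSub _
  have h4 := Finset.card_filter_add_card_filter_not
    (s := (Finset.univ : Finset n)) (p := fun i => E < hM.eigenvalues i)
  rw [Finset.card_univ] at h4
  omega

end counting

lemma ker_toLin'_eq_bot (P Pi : Matrix n n ℂ) (hPiP : Pi * P = 1) :
    LinearMap.ker (Matrix.toLin' P) = ⊥ := by
  rw [LinearMap.ker_eq_bot]
  have hli : Function.LeftInverse (Matrix.toLin' Pi) (Matrix.toLin' P) := by
    intro v
    rw [← Matrix.toLin'_mul_apply, hPiP, Matrix.toLin'_one, LinearMap.id_apply]
  exact hli.injective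

lemma finrank_ker_conj (P N Q Pi Qi : Matrix n n ℂ) (hPiP : Pi * P = 1)
    (hQQi : Q * Qi = 1) (hQiQ : Qi * Q = 1) :
    finrank ℂ (LinearMap.ker (Matrix.toLin' (P * N * Q)))
      = finrank ℂ (LinearMap.ker (Matrix.toLin' N)) := by
  have h1 : LinearMap.ker (Matrix.toLin' (P * N * Q))
      = LinearMap.ker (Matrix.toLin' (N * Q)) := by
    rw [mul_assoc, Matrix.toLin'_mul, LinearMap.ker_comp, ker_toLin'_eq_bot P Pi hPiP,
      Submodule.comap_bot]
  have h2 : LinearMap.ker (Matrix.toLin' (N * Q))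
      = Submodule.comap ((mulVecEquiv Q Qi hQQi hQiQ : (n → ℂ) ≃ₗ[ℂ] (n → ℂ))
          : (n → ℂ) →ₗ[ℂ] (n → ℂ)) (LinearMap.ker (Matrix.toLin' N)) := by
    rw [Matrix.toLin'_mul, LinearMap.ker_comp]
    rfl
  rw [h1, h2, Submodule.comap_equiv_eq_map_symm, LinearEquiv.finrank_map_eq]

lemma finrank_ker_diag (w : n → ℂ) :
    finrank ℂ (LinearMap.ker (Matrix.toLin' (Matrix.diagonal w)))
      = (Finset.univ.filter fun i => w i = 0).card := by
  have h : LinearMap.ker (Matrix.toLin' (Matrix.diagonal w))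
      = coordSub (Finset.univ.filter fun i => w i = 0) := by
    ext v
    simp only [LinearMap.mem_ker, mem_coordSub, Finset.mem_filter, Finset.mem_univ, true_and]
    rw [Matrix.toLin'_apply]
    constructor
    · intro h i hi
      have h2 := congrFun h i
      rw [Matrix.mulVec_diagonal] at h2
      simp only [Pi.zero_apply] at h2
      rcases mul_eq_zero.mp h2 with h' | h'
      · exact absurd h' hi
      · exact h'
    · intro h
      funext i
      show (Matrix.diagonal w *ᵥ v) i = 0
      rw [Matrix.mulVec_diagonal]
      by_cases hw : w i = 0
      · rw [hw, zero_mul]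
      · rw [h i hw, mul_zero]
  rw [h, finrank_coordSub]

end CrossAux

end CrossAuxSec

section MainTheorem

open Matrix CrossAux

/-- Finite-dimensional version of (1.15): for `A` Hermitian, `B ≥ 0` and
`E < min spec(A)`, the lowest eigenvalue of `A − xB` is nonincreasing in
`x ≥ 0`, and the number of eigenvalues of `A − B` below `E` (with
multiplicity) equals the number of `x ∈ (0,1)` for which `E` is an eigenvalue
of `A − xB`, counted with multiplicity `dim ker(A − xB − E)`. -/
theorem eigenvalue_crossings_count {n : Type*} [Fintype n] [DecidableEq n] [Nonempty n]
    (A B : Matrix n n ℂ) (hA : A.IsHermitian) (hB : B.PosSemidef)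
    (hHerm : ∀ x : ℝ, (A - x • B).IsHermitian)
    (E : ℝ) (hE : ∀ i, E < hA.eigenvalues i) :
    (∀ x y : ℝ, 0 ≤ x → x ≤ y →
      (⨅ i, (hHerm y).eigenvalues i) ≤ ⨅ i, (hHerm x).eigenvalues i) ∧
    (((Finset.univ.filter fun i => (hHerm 1).eigenvalues i < E).card : ℝ≥0∞)
      = ∑' x : Set.Ioo (0:ℝ) 1,
          (Module.finrank ℂ
            ↥(LinearMap.ker (Matrix.toLin' (A - (x : ℝ) • B - E • 1))) : ℝ≥0∞)) := by
  constructor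
  · -- Part 1: monotonicity of the lowest eigenvalue
    intro x y hx hxy
    have hcnt : ∀ t : ℝ,
        (Finset.univ.filter fun i => (hHerm x).eigenvalues i < t).card ≤
        (Finset.univ.filter fun i => (hHerm y).eigenvalues i < t).card := by
      intro t
      obtain ⟨W, hWr, hWg⟩ := exists_subspace_lt (hHerm x) t
      rw [← hWr]
      refine finrank_le_of_lt (hHerm y) t W (fun v hv hv0 => ?_)
      have h1 := hWg v hv hv0
      have hqB : 0 ≤ qf B v := (Complex.le_def.mp (hB.dotProduct_mulVec_nonneg v)).1
      have hdq : qf (A - y • B) v = qf (A - x • B) v - qf ((y - x) • B) v := by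
        rw [← qf_sub]
        congr 1
        rw [sub_smul]
        abel
      rw [hdq, qf_smul]
      nlinarith [mul_nonneg (sub_nonneg.mpr hxy) hqB]
    refine le_of_forall_pos_le_add (fun ε hε => ?_)
    obtain ⟨i0, hi0⟩ := Finite.exists_min ((hHerm x).eigenvalues)
    have hinfx : ⨅ i, (hHerm x).eigenvalues i = (hHerm x).eigenvalues i0 :=
      le_antisymm (ciInf_le (Set.Finite.bddBelow (Set.finite_range _)) i0) (le_ciInf hi0)
    have hne : (Finset.univ.filter fun i =>
        (hHerm x).eigenvalues i < (⨅ i, (hHerm x).eigenvalues i) + ε).Nonempty :=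
      ⟨i0, Finset.mem_filter.mpr ⟨Finset.mem_univ _, by rw [hinfx]; linarith⟩⟩
    have hpos : 0 < (Finset.univ.filter fun i =>
        (hHerm y).eigenvalues i < (⨅ i, (hHerm x).eigenvalues i) + ε).card :=
      lt_of_lt_of_le (Finset.card_pos.mpr hne) (hcnt ((⨅ i, (hHerm x).eigenvalues i) + ε))
    obtain ⟨j, hj⟩ := Finset.card_pos.mp hpos
    exact le_trans (ciInf_le (Set.Finite.bddBelow (Set.finite_range _)) j)
      (Finset.mem_filter.mp hj).2.le
  · -- Part 2
    have hq0 : ∀ v : n → ℂ, v ≠ 0 → E * nsq v < qf A v := by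
      obtain ⟨W, hWr, hWg⟩ := exists_subspace_gt hA E
      have hfil : (Finset.univ.filter fun i => E < hA.eigenvalues i) = Finset.univ :=
        Finset.filter_true_of_mem (fun i _ => hE i)
      have hWtop : W = ⊤ := by
        apply Submodule.eq_top_of_finrank_eq
        rw [hWr, hfil, Finset.card_univ, Module.finrank_fintype_fun_eq_card]
      exact fun v hv => hWg v (hWtop ▸ Submodule.mem_top) hv
    set S : Matrix n n ℂ := A - E • 1 with hSdef
    have hSH : S.IsHermitian := by
      show Sᴴ = S
      rw [hSdef, Matrix.conjTranspose_sub, hA.eq, Matrix.conjTranspose_smul,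
        Matrix.conjTranspose_one, star_trivial]
    have hSpd : S.PosDef := by
      refine Matrix.PosDef.of_dotProduct_mulVec_pos hSH (fun v hv => ?_)
      have h2 : qf S v = qf A v - E * nsq v := by
        rw [hSdef, qf_sub, qf_smul_one]
      have h1 : 0 < qf S v := by
        have := hq0 v hv
        linarith
      rw [Complex.lt_def]
      exact ⟨by simpa [qf] using h1, by simp [herm_dot_im hSH v]⟩
    set R : Matrix n n ℂ := (open MatrixOrder in CFC.sqrt S) with hRdef
    have hRps : R.PosSemidef := (open MatrixOrder in (CFC.sqrt_nonneg S).posSemidef)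
    have hRH : R.IsHermitian := hRps.1
    have hRR : R * R = S := (open MatrixOrder in CFC.sqrt_mul_sqrt_self S hSpd.posSemidef.nonneg)
    have hRdet : IsUnit R.det := by
      have hd : R.det * R.det = S.det := by rw [← Matrix.det_mul, hRR]
      have hSdet : S.det ≠ 0 := hSpd.det_pos.ne'
      exact isUnit_iff_ne_zero.mpr (fun h => hSdet (by rw [← hd, h, mul_zero]))
    set Ri : Matrix n n ℂ := R⁻¹ with hRidef
    have hRRi : R * Ri = 1 := Matrix.mul_nonsing_inv R hRdet
    have hRiR : Ri * R = 1 := Matrix.nonsing_inv_mul R hRdet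
    have hRiH : Riᴴ = Ri := by rw [hRidef, Matrix.conjTranspose_nonsing_inv, hRH.eq]
    set K : Matrix n n ℂ := Ri * B * Ri with hKdef
    have hKH : K.IsHermitian := by
      show Kᴴ = K
      rw [hKdef, Matrix.conjTranspose_mul, Matrix.conjTranspose_mul, hRiH, hB.1.eq,
        ← mul_assoc]
    have hRKR : R * K * R = B := by
      rw [hKdef]
      simp only [mul_assoc]
      rw [hRiR, mul_one, ← mul_assoc, hRRi, one_mul]
    have hfact : ∀ t : ℝ, A - t • B - E • 1 = R * (1 - t • K) * R := by
      intro t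
      have h1 : R * (1 - t • K) * R = R * R - t • (R * K * R) := by
        rw [Matrix.mul_sub, mul_one, Matrix.mul_smul, Matrix.sub_mul, Matrix.smul_mul]
      rw [h1, hRR, hRKR, hSdef]
      abel
    -- quadratic form identity
    have hform : ∀ v : n → ℂ, qf (A - (1:ℝ) • B) v - E * nsq v
        = nsq (R *ᵥ v) - qf K (R *ᵥ v) := by
      intro v
      have h1 : qf (A - (1:ℝ) • B - E • 1) v = qf (Rᴴ * (1 - (1:ℝ) • K) * R) v := by
        rw [hRH.eq, ← hfact 1]
      rw [qf_conj, qf_sub (1 : Matrix n n ℂ) ((1:ℝ) • K), qf_one, qf_smul, one_mul,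
        qf_sub, qf_smul_one] at h1
      linarith
    -- Step A: counting via the Birman-Schwinger operator
    have cardA : (Finset.univ.filter fun i => (hHerm 1).eigenvalues i < E).card
        = (Finset.univ.filter fun i => 1 < hKH.eigenvalues i).card := by
      apply le_antisymm
      · obtain ⟨W, hWr, hWg⟩ := exists_subspace_lt (hHerm 1) E
        rw [← hWr, ← LinearEquiv.finrank_map_eq (mulVecEquiv R Ri hRRi hRiR) W]
        refine finrank_le_of_gt hKH 1 _ (fun w hw hw0 => ?_)
        obtain ⟨v, hv, hvw⟩ := Submodule.mem_map.mp hw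
        have hv0 : v ≠ 0 := by rintro rfl; exact hw0 (by rw [← hvw]; exact map_zero _)
        have h1 := hWg v hv hv0
        have happ : (mulVecEquiv R Ri hRRi hRiR : (n → ℂ) →ₗ[ℂ] (n → ℂ)) v = R *ᵥ v :=
          Matrix.toLin'_apply _ _
        have hf := hform v
        rw [one_mul, ← hvw, happ]
        linarith
      · obtain ⟨W, hWr, hWg⟩ := exists_subspace_gt hKH 1
        rw [← hWr, ← LinearEquiv.finrank_map_eq (mulVecEquiv Ri R hRiR hRRi) W]
        refine finrank_le_of_lt (hHerm 1) E _ (fun v hv hv0 => ?_)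
        obtain ⟨w, hw, hwv⟩ := Submodule.mem_map.mp hv
        have hw0 : w ≠ 0 := by rintro rfl; exact hv0 (by rw [← hwv]; exact map_zero _)
        have hKw := hWg w hw hw0
        have happ : (mulVecEquiv Ri R hRiR hRRi : (n → ℂ) →ₗ[ℂ] (n → ℂ)) w = Ri *ᵥ w :=
          Matrix.toLin'_apply _ _
        have hRv : R *ᵥ v = w := by
          rw [← hwv, happ, Matrix.mulVec_mulVec, hRRi, Matrix.one_mulVec]
        have hf := hform v
        rw [hRv] at hf
        rw [one_mul] at hKw
        linarith
    -- Step B: kernel dimensions at each crossing point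
    have hker : ∀ t : ℝ, t ∈ Set.Ioo (0:ℝ) 1 →
        Module.finrank ℂ ↥(LinearMap.ker (Matrix.toLin' (A - t • B - E • 1)))
          = (Finset.univ.filter fun i => hKH.eigenvalues i = 1/t).card := by
      intro t ht
      rw [hfact t]
      rw [finrank_ker_conj R (1 - t • K) R Ri Ri hRiR hRRi hRiR]
      set V : Matrix n n ℂ := (hKH.eigenvectorUnitary : Matrix n n ℂ) with hVdef
      have hVVs : V * star V = 1 := Unitary.mul_star_self_of_mem hKH.eigenvectorUnitary.prop
      have hVsV : star V * V = 1 := Unitary.star_mul_self_of_mem hKH.eigenvectorUnitary.prop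
      have hKspec : K = V * Matrix.diagonal (RCLike.ofReal ∘ hKH.eigenvalues) * star V :=
        by have h := hKH.spectral_theorem; rwa [Unitary.conjStarAlgAut_apply] at h
      have hdiag : Matrix.diagonal (fun i => ((1 - t * hKH.eigenvalues i : ℝ) : ℂ))
          = 1 - t • Matrix.diagonal (RCLike.ofReal ∘ hKH.eigenvalues) := by
        ext i j
        by_cases h : i = j
        · subst h
          simp [Matrix.diagonal_apply_eq, Complex.real_smul, Matrix.one_apply_eq]
        · simp [Matrix.diagonal_apply_ne _ h, Matrix.one_apply_ne h]
      have hdd : (1 : Matrix n n ℂ) - t • K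
          = V * Matrix.diagonal (fun i => ((1 - t * hKH.eigenvalues i : ℝ) : ℂ)) * star V := by
        rw [hdiag, Matrix.mul_sub, Matrix.sub_mul, Matrix.mul_smul, Matrix.smul_mul,
          mul_one, hVVs, ← hKspec]
      rw [hdd, finrank_ker_conj V _ (star V) (star V) V hVsV hVsV hVVs, finrank_ker_diag]
      have hfeq : (Finset.univ.filter fun i => ((1 - t * hKH.eigenvalues i : ℝ) : ℂ) = 0)
          = (Finset.univ.filter fun i => hKH.eigenvalues i = 1/t) := by
        apply Finset.filter_congr
        intro i _
        have ht0 : t ≠ 0 := ne_of_gt ht.1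
        rw [Complex.ofReal_eq_zero]
        constructor
        · intro h
          rw [eq_div_iff ht0]
          linarith
        · intro h
          rw [h]
          field_simp
          norm_num
      rw [hfeq]
    -- the function summed over (0,1)
    set g : ℝ → ℝ≥0∞ := fun t => if t ∈ Set.Ioo (0:ℝ) 1
        then ((Finset.univ.filter fun i => hKH.eigenvalues i = 1/t).card : ℝ≥0∞) else 0
      with hgdef
    have hsum1 : ∑' x : Set.Ioo (0:ℝ) 1,
        (Module.finrank ℂ
          ↥(LinearMap.ker (Matrix.toLin' (A - (x : ℝ) • B - E • 1))) : ℝ≥0∞)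
        = ∑' t : ℝ, g t := by
      have h1 : ∀ x : Set.Ioo (0:ℝ) 1,
          (Module.finrank ℂ
            ↥(LinearMap.ker (Matrix.toLin' (A - (x : ℝ) • B - E • 1))) : ℝ≥0∞) = g ↑x := by
        intro x
        have h2 := hker x x.2
        simp only [hgdef]
        rw [if_pos x.2]
        exact_mod_cast congrArg (Nat.cast : ℕ → ℝ≥0∞) h2
      rw [tsum_congr h1, tsum_subtype]
      apply tsum_congr
      intro t
      by_cases ht : t ∈ Set.Ioo (0:ℝ) 1
      · rw [Set.indicator_of_mem ht]
      · rw [Set.indicator_of_notMem ht]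
        simp only [hgdef]
        rw [if_neg ht]
    set T : Finset ℝ := Finset.univ.image (fun i => 1 / hKH.eigenvalues i) with hTdef
    have hsum2 : ∑' t : ℝ, g t = ∑ t ∈ T, g t := by
      apply tsum_eq_sum
      intro t ht
      by_cases htI : t ∈ Set.Ioo (0:ℝ) 1
      · have hcard0 : (Finset.univ.filter fun i => hKH.eigenvalues i = 1/t).card = 0 := by
          rw [Finset.card_eq_zero, Finset.filter_eq_empty_iff]
          intro i _ heq
          apply ht
          rw [hTdef]
          exact Finset.mem_image.mpr ⟨i, Finset.mem_univ i, by rw [heq, one_div_one_div]⟩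
        simp only [hgdef]
        rw [if_pos htI, hcard0]
        simp
      · simp only [hgdef]
        rw [if_neg htI]
    have key : ∀ i, (∑ t ∈ T, if t ∈ Set.Ioo (0:ℝ) 1 ∧ hKH.eigenvalues i = 1/t
        then (1:ℕ) else 0) = if 1 < hKH.eigenvalues i then 1 else 0 := by
      intro i
      by_cases hgt : 1 < hKH.eigenvalues i
      · rw [if_pos hgt]
        have hμpos : (0:ℝ) < hKH.eigenvalues i := lt_trans zero_lt_one hgt
        have hmem : 1 / hKH.eigenvalues i ∈ T :=
          Finset.mem_image_of_mem _ (Finset.mem_univ i)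
        have hiff : ∀ t ∈ T, ((t ∈ Set.Ioo (0:ℝ) 1 ∧ hKH.eigenvalues i = 1/t)
            ↔ t = 1 / hKH.eigenvalues i) := by
          intro t _
          constructor
          · rintro ⟨htI, hte⟩
            rw [hte, one_div_one_div]
          · rintro rfl
            refine ⟨⟨one_div_pos.mpr hμpos, ?_⟩, ?_⟩
            · rw [div_lt_one hμpos]; exact hgt
            · rw [one_div_one_div]
        rw [Finset.sum_congr rfl (fun t h => if_congr (hiff t h) rfl rfl),
          Finset.sum_ite_eq' T (1 / hKH.eigenvalues i) (fun _ => (1:ℕ)), if_pos hmem]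
      · rw [if_neg hgt]
        refine Finset.sum_eq_zero (fun t _ => ?_)
        rw [if_neg]
        rintro ⟨htI, hte⟩
        apply hgt
        rw [hte, lt_div_iff₀ htI.1, one_mul]
        exact htI.2
    have hnat : (∑ t ∈ T, if t ∈ Set.Ioo (0:ℝ) 1
        then (Finset.univ.filter fun i => hKH.eigenvalues i = 1/t).card else 0)
        = (Finset.univ.filter fun i => 1 < hKH.eigenvalues i).card := by
      have h1 : ∀ t : ℝ, (if t ∈ Set.Ioo (0:ℝ) 1
          then (Finset.univ.filter fun i => hKH.eigenvalues i = 1/t).card else 0)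
          = ∑ i, if t ∈ Set.Ioo (0:ℝ) 1 ∧ hKH.eigenvalues i = 1/t then (1:ℕ) else 0 := by
        intro t
        by_cases htI : t ∈ Set.Ioo (0:ℝ) 1
        · rw [if_pos htI, Finset.card_filter]
          exact Finset.sum_congr rfl (fun i _ => by simp [htI])
        · simp [htI]
      rw [Finset.sum_congr rfl (fun t _ => h1 t), Finset.sum_comm, Finset.card_filter]
      exact Finset.sum_congr rfl (fun i _ => key i)
    have hsum3 : ∑ t ∈ T, g t
        = ((Finset.univ.filter fun i => 1 < hKH.eigenvalues i).card : ℝ≥0∞) := by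
      have h1 : ∀ t ∈ T, g t = ((if t ∈ Set.Ioo (0:ℝ) 1
          then (Finset.univ.filter fun i => hKH.eigenvalues i = 1/t).card else 0 : ℕ) : ℝ≥0∞) := by
        intro t _
        simp only [hgdef]
        by_cases htI : t ∈ Set.Ioo (0:ℝ) 1 <;> simp [htI]
      rw [Finset.sum_congr rfl h1, ← Nat.cast_sum, hnat]
    rw [hsum1, hsum2, hsum3, cardA]

end MainTheorem
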